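/- Let v ∈ ℝ with |v| < 1 and Ψ(t,x) = 4·arctan(exp((x − vt)/√(1 − v²))). With h(Ψ) = 2·sin(Ψ/2), the invariant Δ = (∂ₓΨ)² − (∂ₜΨ)² − h(Ψ)² vanishes identically: (∂ₓΨ)² − (∂ₜΨ)² − 4·sin²(Ψ/2) = 0 at every point (t,x) ∈ ℝ². That is, the sine–Gordon kink produces a null force-free configuration (|B|² = |E|²). -/

import Mathlib

noncomputable section

/-- `∂ₜΨ`. -/
def psiT (Ψ : ℝ × ℝ → ℝ) (t x : ℝ) : ℝ := deriv (fun s => Ψ (s, x)) t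

/-- `∂ₓΨ`. -/
def psiX (Ψ : ℝ × ℝ → ℝ) (t x : ℝ) : ℝ := deriv (fun s => Ψ (t, s)) x

/-- for the sine–Gordon kink `Ψ = 4·arctan(exp((x − vt)/√(1 − v²)))`, `|v| < 1`,
with `h(Ψ) = 2·sin(Ψ/2)`, the invariant `Δ = (∂ₓΨ)² − (∂ₜΨ)² − h(Ψ)²` vanishes identically:
`(∂ₓΨ)² − (∂ₜΨ)² − 4·sin²(Ψ/2) = 0` everywhere, i.e. the kink is a null configuration. -/
theorem stmt7 (v : ℝ) (hv : |v| < 1) (Ψ : ℝ × ℝ → ℝ)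
    (hΨ : ∀ t x : ℝ,
      Ψ (t, x) = 4 * Real.arctan (Real.exp ((x - v * t) / Real.sqrt (1 - v ^ 2)))) :
    ∀ t x : ℝ,
      (psiX Ψ t x) ^ 2 - (psiT Ψ t x) ^ 2 - 4 * (Real.sin (Ψ (t, x) / 2)) ^ 2 = 0 := by
  intro t x
  have hpos : (0:ℝ) < 1 - v ^ 2 := by nlinarith [abs_lt.mp hv, sq_abs v, abs_nonneg v]
  set γ : ℝ := Real.sqrt (1 - v ^ 2) with hγdef
  have hγpos : 0 < γ := Real.sqrt_pos.mpr hpos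
  have hγsq : γ ^ 2 = 1 - v ^ 2 := Real.sq_sqrt hpos.le
  set u : ℝ := (x - v * t) / γ with hu
  set E : ℝ := Real.exp u with hE
  have hEpos : 0 < E := Real.exp_pos u
  have hD : 0 < 1 + E ^ 2 := by positivity
  -- x-derivative
  have hX : psiX Ψ t x = 4 * ((1 / (1 + E ^ 2)) * (E * (1 / γ))) := by
    have h1 : HasDerivAt (fun s : ℝ => (s - v * t) / γ) (1 / γ) x := by
      simpa using ((hasDerivAt_id x).sub_const (v * t)).div_const γ
    have h2 : HasDerivAt (fun s : ℝ => Real.exp ((s - v * t) / γ)) (E * (1 / γ)) x :=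
      h1.exp
    have h3 : HasDerivAt (fun s : ℝ => Real.arctan (Real.exp ((s - v * t) / γ)))
        ((1 / (1 + E ^ 2)) * (E * (1 / γ))) x := h2.arctan
    have h4 := (h3.const_mul 4)
    have hfun : (fun s : ℝ => Ψ (t, s))
        = fun s : ℝ => 4 * Real.arctan (Real.exp ((s - v * t) / γ)) := by
      funext s; rw [hΨ t s]
    rw [psiX, hfun, h4.deriv]
  -- t-derivative
  have hT : psiT Ψ t x = 4 * ((1 / (1 + E ^ 2)) * (E * (-v / γ))) := by
    have h1 : HasDerivAt (fun s : ℝ => (x - v * s) / γ) (-v / γ) t := by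
      have := ((hasDerivAt_const t x).sub ((hasDerivAt_id t).const_mul v)).div_const γ
      simpa using this
    have h2 : HasDerivAt (fun s : ℝ => Real.exp ((x - v * s) / γ)) (E * (-v / γ)) t :=
      h1.exp
    have h3 : HasDerivAt (fun s : ℝ => Real.arctan (Real.exp ((x - v * s) / γ)))
        ((1 / (1 + E ^ 2)) * (E * (-v / γ))) t := h2.arctan
    have h4 := (h3.const_mul 4)
    have hfun : (fun s : ℝ => Ψ (s, x))
        = fun s : ℝ => 4 * Real.arctan (Real.exp ((x - v * s) / γ)) := by
      funext s; rw [hΨ s x]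
    rw [psiT, hfun, h4.deriv]
  -- sine term
  have hsin : Real.sin (Ψ (t, x) / 2) = 2 * E / (1 + E ^ 2) := by
    rw [hΨ t x]
    have h2 : (4 * Real.arctan E) / 2 = 2 * Real.arctan E := by ring
    rw [h2, Real.sin_two_mul, Real.sin_arctan, Real.cos_arctan]
    have hs : Real.sqrt (1 + E ^ 2) * Real.sqrt (1 + E ^ 2) = 1 + E ^ 2 :=
      Real.mul_self_sqrt (by positivity)
    field_simp
    rw [Real.sq_sqrt (by positivity)]

  rw [hX, hT, hsin]
  have hγne : γ ≠ 0 := ne_of_gt hγpos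
  have hDne : (1 + E ^ 2) ≠ 0 := ne_of_gt hD
  field_simp
  linear_combination (-16 * E ^ 2) * hγsq
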